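/- Let x, s ∈ int 𝓛^n. Then the vectors T_x s and T_s x have the same Jordan eigenvalues; that is, (T_x s)₀ = (T_s x)₀ and ‖overline{(T_x s)}‖ = ‖overline{(T_s x)}‖, where v = (v₀; v̄) denotes the splitting of v ∈ ℝ^n into its first coordinate and the rest. In particular, ‖T_x s − ν e‖_F = ‖T_s x − ν e‖_F for every ν ∈ ℝ. -/

import Mathlib

set_option synthInstance.maxHeartbeats 1000000
set_option maxHeartbeats 1000000

noncomputable section
open scoped BigOperators

namespace SOCP

/-- `E k` is `ℝ^(k+1)`, written as `(x₀; x̄)` with `x̄ ∈ ℝ^k`. -/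
abbrev E (k : ℕ) := EuclideanSpace ℝ (Fin (k + 1))

/-- Build an element of `E k` from a plain function. -/
def mk {k : ℕ} (f : Fin (k + 1) → ℝ) : E k := (WithLp.equiv 2 _).symm f

/-- The Euclidean norm `‖x̄‖` of the tail of `x`. -/
def tnorm {k : ℕ} (x : E k) : ℝ := Real.sqrt (∑ i : Fin k, (x i.succ) ^ 2)

/-- First Jordan eigenvalue `λ₁(x) = x₀ + ‖x̄‖`. -/
def lam1 {k : ℕ} (x : E k) : ℝ := x 0 + tnorm x

/-- Second Jordan eigenvalue `λ₂(x) = x₀ − ‖x̄‖`. -/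
def lam2 {k : ℕ} (x : E k) : ℝ := x 0 - tnorm x

/-- Jordan product `x ∘ y = (xᵀy; x₀ȳ + y₀x̄)`. -/
def jmul {k : ℕ} (x y : E k) : E k :=
  mk (fun j => if j = 0 then ∑ i, x i * y i else x 0 * y j + y 0 * x j)

/-- The Jordan identity `e = (1; 0)`. -/
def idE {k : ℕ} : E k := mk (fun j => if j = 0 then 1 else 0)

/-- First Jordan frame vector `c₁(x) = ½(1; x̄/‖x̄‖)`. -/
def c1 {k : ℕ} (x : E k) : E k :=
  mk (fun j => if j = 0 then 1 / 2 else x j / (2 * tnorm x))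

/-- Second Jordan frame vector `c₂(x) = ½(1; −x̄/‖x̄‖)`. -/
def c2 {k : ℕ} (x : E k) : E k :=
  mk (fun j => if j = 0 then 1 / 2 else -x j / (2 * tnorm x))

/-- Arrowhead matrix `Arw(x) = [[x₀, x̄ᵀ], [x̄, x₀ I]]`. -/
def Arw {k : ℕ} (x : E k) : Matrix (Fin (k + 1)) (Fin (k + 1)) ℝ :=
  Matrix.of fun i j =>
    if i = 0 then x j else if j = 0 then x i else if i = j then x 0 else 0

/-- Quadratic representation `Q_x = 2 Arw(x)² − Arw(x ∘ x)`. -/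
def Qmat {k : ℕ} (x : E k) : Matrix (Fin (k + 1)) (Fin (k + 1)) ℝ :=
  (2 : ℝ) • (Arw x * Arw x) - Arw (jmul x x)

/-- Jordan square root `x^{1/2} = √λ₁ c₁ + √λ₂ c₂` (equal to `(√x₀; 0)` when `x̄ = 0`). -/
def jsqrt {k : ℕ} (x : E k) : E k :=
  if tnorm x = 0 then mk (fun j => if j = 0 then Real.sqrt (x 0) else 0)
  else Real.sqrt (lam1 x) • c1 x + Real.sqrt (lam2 x) • c2 x

/-- `T_x := Q_{x^{1/2}}`. -/
def Tmat {k : ℕ} (x : E k) : Matrix (Fin (k + 1)) (Fin (k + 1)) ℝ := Qmat (jsqrt x)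

/-- Jordan inverse `x⁻¹ = λ₁⁻¹ c₁ + λ₂⁻¹ c₂` (equal to `(x₀⁻¹; 0)` when `x̄ = 0`). -/
def jinv {k : ℕ} (x : E k) : E k :=
  if tnorm x = 0 then mk (fun j => if j = 0 then (x 0)⁻¹ else 0)
  else (lam1 x)⁻¹ • c1 x + (lam2 x)⁻¹ • c2 x

/-- Matrix-vector product, as a map on `E k`. -/
def mulVecE {k : ℕ} (M : Matrix (Fin (k + 1)) (Fin (k + 1)) ℝ) (v : E k) : E k :=
  mk (M.mulVec (WithLp.equiv 2 _ v))

/-- Block vectors `x = (x₁; …; x_r)` with `x_i ∈ ℝ^{d i + 2}` (so each block has dim ≥ 2). -/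
abbrev BV {r : ℕ} (d : Fin r → ℕ) : Type := (i : Fin r) → E (d i + 1)

variable {r : ℕ} {d : Fin r → ℕ}

/-- Spectral norm `‖x‖₂ = max_i (|x_{i,0}| + ‖x̄_i‖)`. -/
def specNorm (x : BV d) : ℝ := ⨆ i, (|x i 0| + tnorm (x i))

/-- Frobenius norm `‖x‖_F = √(Σ_i (λ₁(x_i)² + λ₂(x_i)²))`. -/
def frobNorm (x : BV d) : ℝ := Real.sqrt (∑ i, (lam1 (x i) ^ 2 + lam2 (x i) ^ 2))

/-- Minimum Jordan eigenvalue `λ_min(x) = min_i λ₂(x_i)`. -/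
def lamMin (x : BV d) : ℝ := ⨅ i, lam2 (x i)

/-- Blockwise Jordan product. -/
def jmulB (x y : BV d) : BV d := fun i => jmul (x i) (y i)

/-- Block identity element. -/
def idB : BV d := fun _ => idE

/-- Membership in the interior of the product of Lorentz cones: `‖x̄_i‖ < x_{i,0}` for all `i`. -/
def inIntLB (x : BV d) : Prop := ∀ i, tnorm (x i) < x i 0

/-- Euclidean inner product of the concatenated vectors. -/
def ip (x y : BV d) : ℝ := ∑ i, ∑ j, x i j * y i j

/-- Block-diagonal application of `T_x`: `(T_x s)_i = T_{x_i} s_i`. -/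
def TB (x s : BV d) : BV d := fun i => mulVecE (Tmat (x i)) (s i)

/-- Distance from the central path `d(x, s, ν) = ‖T_x s − ν e‖_F`. -/
def cdist (x s : BV d) (ν : ℝ) : ℝ := frobNorm (TB x s - ν • (idB : BV d))

/-- Blockwise Jordan inverse. -/
def jinvB (x : BV d) : BV d := fun i => jinv (x i)


variable {k : ℕ}

lemma mk_apply (f : Fin (k+1) → ℝ) (i : Fin (k+1)) : mk f i = f i := rfl

lemma tnorm_nonneg (x : E k) : 0 ≤ tnorm x := Real.sqrt_nonneg _

lemma sum_sq_tail (x : E k) : ∑ j : Fin k, (x j.succ) ^ 2 = tnorm x ^ 2 := by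
  rw [tnorm, Real.sq_sqrt]
  exact Finset.sum_nonneg fun j _ => sq_nonneg _

lemma jmul_zero (x y : E k) : jmul x y 0 = ∑ i, x i * y i := by
  simp [jmul, mk_apply]

lemma jmul_succ (x y : E k) (j : Fin k) :
    jmul x y j.succ = x 0 * y j.succ + y 0 * x j.succ := by
  simp [jmul, mk_apply, Fin.succ_ne_zero]

lemma arw_mulVec_zero (w : E k) (v : Fin (k+1) → ℝ) :
    (Arw w).mulVec v 0 = ∑ j, w j * v j := by
  simp [Matrix.mulVec, dotProduct, Arw]

lemma arw_mulVec_succ (w : E k) (v : Fin (k+1) → ℝ) (j : Fin k) :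
    (Arw w).mulVec v j.succ = w j.succ * v 0 + w 0 * v j.succ := by
  simp only [Matrix.mulVec, dotProduct, Arw, Matrix.of_apply]
  rw [Fin.sum_univ_succ]
  simp [Fin.succ_ne_zero, Fin.succ_inj]
lemma mulVecE_eq (M : Matrix (Fin (k+1)) (Fin (k+1)) ℝ) (v : E k) (i : Fin (k+1)) :
    mulVecE M v i = M.mulVec (fun j => v j) i := rfl

lemma qmat_mulVec (w : E k) (v : Fin (k+1) → ℝ) (i : Fin (k+1)) :
    (Qmat w).mulVec v i = 2 * (Arw w).mulVec ((Arw w).mulVec v) i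
      - (Arw (jmul w w)).mulVec v i := by
  rw [Qmat, Matrix.sub_mulVec, Matrix.smul_mulVec, Matrix.mulVec_mulVec]
  simp

lemma sumaux (f g : Fin k → ℝ) (c : ℝ) :
    ∑ j, c * f j * g j = c * ∑ j, f j * g j := by
  rw [Finset.mul_sum]; exact Finset.sum_congr rfl fun j _ => by ring

lemma Q_zero (w s : E k) :
    mulVecE (Qmat w) s 0 =
      2 * (∑ i, w i * s i) * w 0
        - (w 0 ^ 2 - ∑ j : Fin k, (w j.succ) ^ 2) * s 0 := by
  rw [mulVecE_eq, qmat_mulVec, arw_mulVec_zero, arw_mulVec_zero]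
  rw [Fin.sum_univ_succ (f := fun j => w j * (Arw w).mulVec (fun j => s j) j)]
  rw [arw_mulVec_zero]
  have h1 : ∑ j : Fin k, w j.succ * (Arw w).mulVec (fun j => s j) j.succ
      = (∑ j : Fin k, (w j.succ)^2) * s 0 + w 0 * ∑ j : Fin k, w j.succ * s j.succ := by
    rw [Finset.sum_mul, Finset.mul_sum, ← Finset.sum_add_distrib]
    refine Finset.sum_congr rfl fun j _ => ?_
    rw [arw_mulVec_succ]; ring
  rw [h1]
  rw [Fin.sum_univ_succ (f := fun j => jmul w w j * s j), jmul_zero]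
  have h2 : ∑ j : Fin k, jmul w w j.succ * s j.succ
      = 2 * w 0 * ∑ j : Fin k, w j.succ * s j.succ := by
    rw [Finset.mul_sum]
    refine Finset.sum_congr rfl fun j _ => ?_
    rw [jmul_succ]; ring
  rw [h2]
  rw [Fin.sum_univ_succ (f := fun i => w i * s i), Fin.sum_univ_succ (f := fun i => w i * w i)]
  have h3 : ∑ j : Fin k, w j.succ * w j.succ = ∑ j : Fin k, (w j.succ)^2 :=
    Finset.sum_congr rfl fun j _ => by ring
  rw [h3]; ring

lemma Q_succ (w s : E k) (j : Fin k) :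
    mulVecE (Qmat w) s j.succ =
      2 * (∑ i, w i * s i) * w j.succ
        + (w 0 ^ 2 - ∑ m : Fin k, (w m.succ) ^ 2) * s j.succ := by
  rw [mulVecE_eq, qmat_mulVec, arw_mulVec_succ, arw_mulVec_zero, arw_mulVec_succ,
    arw_mulVec_succ, jmul_zero, jmul_succ]
  rw [Fin.sum_univ_succ (f := fun i => w i * s i), Fin.sum_univ_succ (f := fun i => w i * w i)]
  have h3 : ∑ m : Fin k, w m.succ * w m.succ = ∑ m : Fin k, (w m.succ)^2 :=
    Finset.sum_congr rfl fun m _ => by ring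
  rw [h3]; ring
lemma jsqrt_facts (x : E k) (hx : tnorm x < x 0) :
    ((jsqrt x) 0 ^ 2 + ∑ j : Fin k, ((jsqrt x) j.succ) ^ 2 = x 0) ∧
    (∀ j : Fin k, 2 * (jsqrt x) 0 * (jsqrt x) j.succ = x j.succ) := by
  have ht0 : 0 ≤ tnorm x := tnorm_nonneg x
  have hx0 : 0 < x 0 := lt_of_le_of_lt ht0 hx
  by_cases ht : tnorm x = 0
  · have hsum : ∑ j : Fin k, (x j.succ) ^ 2 = 0 := by
      rw [sum_sq_tail, ht]; ring
    have hz : ∀ j : Fin k, x j.succ = 0 := by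
      intro j
      have := (Finset.sum_eq_zero_iff_of_nonneg (fun j _ => sq_nonneg (x j.succ))).mp hsum j (Finset.mem_univ j)
      exact pow_eq_zero_iff two_ne_zero |>.mp this
    have hw : ∀ j : Fin k, (jsqrt x) j.succ = 0 := by
      intro j; simp [jsqrt, ht, mk_apply, Fin.succ_ne_zero]
    constructor
    · have hw0 : (jsqrt x) 0 = Real.sqrt (x 0) := by simp [jsqrt, ht, mk_apply]
      rw [hw0, Real.sq_sqrt hx0.le]
      simp [hw]
    · intro j; rw [hw j, hz j]; ring
  · have hL2 : 0 ≤ lam2 x := by rw [lam2]; linarith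
    have hL1 : 0 ≤ lam1 x := by rw [lam1]; linarith
    set a := Real.sqrt (lam1 x) with ha
    set b := Real.sqrt (lam2 x) with hb
    have ha2 : a ^ 2 = x 0 + tnorm x := by rw [ha, Real.sq_sqrt hL1, lam1]
    have hb2 : b ^ 2 = x 0 - tnorm x := by rw [hb, Real.sq_sqrt hL2, lam2]
    have hw0 : (jsqrt x) 0 = a * (1/2) + b * (1/2) := by
      simp [jsqrt, ht, c1, c2, mk_apply, ha, hb]
    have hwj : ∀ j : Fin k, (jsqrt x) j.succ
        = a * (x j.succ / (2 * tnorm x)) + b * (-x j.succ / (2 * tnorm x)) := by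
      intro j; simp [jsqrt, ht, c1, c2, mk_apply, Fin.succ_ne_zero, ha, hb]
    have hW : ∑ j : Fin k, ((jsqrt x) j.succ) ^ 2
        = ((a - b) / (2 * tnorm x)) ^ 2 * tnorm x ^ 2 := by
      rw [← sum_sq_tail, Finset.mul_sum]
      refine Finset.sum_congr rfl fun j _ => ?_
      rw [hwj j]; ring
    constructor
    · rw [hw0, hW]
      have h4 : ((a - b) / (2 * tnorm x)) ^ 2 * tnorm x ^ 2 = (a - b) ^ 2 / 4 := by
        field_simp; ring
      rw [h4]
      linear_combination ha2 / 2 + hb2 / 2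
    · intro j
      rw [hw0, hwj j]
      have h5 : 2 * (a * (1/2) + b * (1/2)) * (a * (x j.succ / (2 * tnorm x)) + b * (-x j.succ / (2 * tnorm x)))
          = (a ^ 2 - b ^ 2) * x j.succ / (2 * tnorm x) := by ring
      rw [h5, ha2, hb2]
      field_simp
      ring
lemma T_apply_zero (x s : E k) (hx : tnorm x < x 0) :
    mulVecE (Tmat x) s 0 = ∑ i, x i * s i := by
  obtain ⟨h1, h3⟩ := jsqrt_facts x hx
  set w := jsqrt x with hw
  rw [Tmat, Q_zero]
  rw [Fin.sum_univ_succ (f := fun i => w i * s i), Fin.sum_univ_succ (f := fun i => x i * s i)]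
  have key : ∑ m : Fin k, x m.succ * s m.succ
      = 2 * w 0 * ∑ m : Fin k, w m.succ * s m.succ := by
    rw [Finset.mul_sum]
    refine Finset.sum_congr rfl fun m _ => ?_
    rw [← h3 m]; ring
  rw [key]
  linear_combination s 0 * h1

lemma T_tail_sq (x s : E k) (hx : tnorm x < x 0) :
    ∑ j : Fin k, (mulVecE (Tmat x) s j.succ) ^ 2 =
      (∑ i, x i * s i) ^ 2
        - ((x 0) ^ 2 - ∑ j : Fin k, (x j.succ) ^ 2)
          * ((s 0) ^ 2 - ∑ j : Fin k, (s j.succ) ^ 2) := by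
  obtain ⟨h1, h3⟩ := jsqrt_facts x hx
  set w := jsqrt x with hw
  set W := ∑ m : Fin k, (w m.succ) ^ 2 with hWdef
  set S' := ∑ m : Fin k, w m.succ * s m.succ with hS'def
  set S2 := ∑ m : Fin k, (s m.succ) ^ 2 with hS2def
  have hI : (∑ i, w i * s i) = w 0 * s 0 + S' := by
    rw [Fin.sum_univ_succ (f := fun i => w i * s i)]
  have expand : ∑ j : Fin k, (mulVecE (Tmat x) s j.succ) ^ 2
      = 4 * (w 0 * s 0 + S') ^ 2 * W + 4 * (w 0 * s 0 + S') * (w 0 ^ 2 - W) * S'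
        + (w 0 ^ 2 - W) ^ 2 * S2 := by
    rw [hWdef, hS'def, hS2def, Finset.mul_sum, Finset.mul_sum, Finset.mul_sum,
      ← Finset.sum_add_distrib, ← Finset.sum_add_distrib]
    refine Finset.sum_congr rfl fun j _ => ?_
    rw [Tmat, Q_succ, hI]
    ring
  have hX' : ∑ m : Fin k, x m.succ * s m.succ = 2 * w 0 * S' := by
    rw [hS'def, Finset.mul_sum]
    refine Finset.sum_congr rfl fun m _ => ?_
    rw [← h3 m]; ring
  have hWx : ∑ m : Fin k, (x m.succ) ^ 2 = 4 * w 0 ^ 2 * W := by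
    rw [hWdef, Finset.mul_sum]
    refine Finset.sum_congr rfl fun m _ => ?_
    rw [← h3 m]; ring
  have hx0 : x 0 = w 0 ^ 2 + W := h1.symm
  rw [expand, Fin.sum_univ_succ (f := fun i => x i * s i), hX', hWx]
  linear_combination (-(S2) * (x 0 + (w 0 ^ 2 + W)) - 4 * w 0 * s 0 * S') * hx0
/-- For `x, s ∈ int 𝓛^n`, the vectors `T_x s` and `T_s x` have the same
Jordan eigenvalues, i.e. the same first coordinate and the same tail norm; in particular
`‖T_x s − ν e‖_F = ‖T_s x − ν e‖_F` for every `ν`. -/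
theorem Tx_s_eigenvalues_symm {k : ℕ} (x s : E k)
    (hx : tnorm x < x 0) (hs : tnorm s < s 0) :
    (mulVecE (Tmat x) s) 0 = (mulVecE (Tmat s) x) 0 ∧
    tnorm (mulVecE (Tmat x) s) = tnorm (mulVecE (Tmat s) x) ∧
    ∀ ν : ℝ, Real.sqrt 2 * ‖mulVecE (Tmat x) s - ν • idE‖ =
      Real.sqrt 2 * ‖mulVecE (Tmat s) x - ν • idE‖ := by
  have hsum : (∑ i, x i * s i) = ∑ i, s i * x i :=
    Finset.sum_congr rfl fun i _ => mul_comm _ _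
  have h0 : mulVecE (Tmat x) s 0 = mulVecE (Tmat s) x 0 := by
    rw [T_apply_zero x s hx, T_apply_zero s x hs, hsum]
  have hT : (∑ j : Fin k, (mulVecE (Tmat x) s j.succ) ^ 2)
      = ∑ j : Fin k, (mulVecE (Tmat s) x j.succ) ^ 2 := by
    rw [T_tail_sq x s hx, T_tail_sq s x hs, hsum]; ring
  refine ⟨h0, ?_, ?_⟩
  · rw [tnorm, tnorm, hT]
  · intro ν
    have hnorm : ∀ u : E k, ‖u - ν • idE‖
        = Real.sqrt ((u 0 - ν) ^ 2 + ∑ j : Fin k, (u j.succ) ^ 2) := by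
      intro u
      rw [EuclideanSpace.norm_eq]
      congr 1
      rw [Fin.sum_univ_succ]
      congr 1
      · simp [idE, mk_apply, Real.norm_eq_abs, sq_abs]
      · refine Finset.sum_congr rfl fun j _ => ?_
        simp [idE, mk_apply, Fin.succ_ne_zero, Real.norm_eq_abs, sq_abs]
    rw [hnorm, hnorm, h0, hT]

end SOCP
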